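/- Let q ∈ ℂ* not be a root of unity and let M be an A_q-module finitely generated over A = ℂ[z,z⁻¹]. If m₁,...,m_r ∈ M all satisfy σm_j = m_j and are linearly independent over ℂ, then they are linearly independent over A. Consequently dim_ℂ ker(σ−1 : M → M) ≤ rk_A(M). -/

import Mathlib

open LaurentPolynomial

/-- View a Laurent polynomial as a finitely supported function (definitional). -/
abbrev coeffL (f : LaurentPolynomial ℂ) : ℤ →₀ ℂ := f.coeff

section Aux

variable {M : Type*} [AddCommGroup M] [Module ℂ M] [Module (LaurentPolynomial ℂ) M]
  [IsScalarTower ℂ (LaurentPolynomial ℂ) M]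

lemma aux_smul_comm (c : ℂ) (f : LaurentPolynomial ℂ) (x : M) :
    f • c • x = c • f • x := by
  rw [← algebraMap_smul (LaurentPolynomial ℂ) c x, ← mul_smul, mul_comm, mul_smul,
    algebraMap_smul]

lemma aux_C_smul (c : ℂ) (x : M) : (C c : LaurentPolynomial ℂ) • x = c • x := by
  rw [LaurentPolynomial.C_eq_algebraMap, algebraMap_smul]

lemma aux_smul_expand (f : LaurentPolynomial ℂ) (x : M) :
    f • x = ∑ n ∈ (coeffL f).support, (coeffL f n) • ((T n : LaurentPolynomial ℂ) • x) := by
  have hf : f = ∑ n ∈ (coeffL f).support,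
      (AddMonoidAlgebra.single n (coeffL f n) : LaurentPolynomial ℂ) :=
    (AddMonoidAlgebra.sum_coeff_single f).symm
  conv_lhs => rw [hf]
  rw [Finset.sum_smul]
  refine Finset.sum_congr rfl fun n _ => ?_
  rw [single_eq_C_mul_T, mul_smul, aux_C_smul]

lemma aux_T_inj (n : ℤ) (x : M) (h : (T n : LaurentPolynomial ℂ) • x = 0) : x = 0 := by
  have : (T (-n) : LaurentPolynomial ℂ) • (T n : LaurentPolynomial ℂ) • x = x := by
    rw [← mul_smul, ← T_add, neg_add_cancel, T_zero, one_smul]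
  rw [h, smul_zero] at this
  exact this.symm

variable (q : ℂ) (σ : M ≃ₗ[ℂ] M)
  (hσ : ∀ m : M, σ ((T 1 : LaurentPolynomial ℂ) • m) = q • ((T 1 : LaurentPolynomial ℂ) • σ m))

include hσ in
lemma aux_T_smul (hq0 : q ≠ 0) (n : ℤ) (x : M) :
    σ ((T n : LaurentPolynomial ℂ) • x) = q ^ n • ((T n : LaurentPolynomial ℂ) • σ x) := by
  have hneg : ∀ y : M, σ ((T (-1) : LaurentPolynomial ℂ) • y)
      = q⁻¹ • ((T (-1) : LaurentPolynomial ℂ) • σ y) := by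
    intro y
    have h1 : σ y = q • (T 1 : LaurentPolynomial ℂ) • σ ((T (-1) : LaurentPolynomial ℂ) • y) := by
      have := hσ ((T (-1) : LaurentPolynomial ℂ) • y)
      rwa [← mul_smul, ← T_add, show (1 + -1 : ℤ) = 0 by ring, T_zero, one_smul] at this
    rw [h1, aux_smul_comm, smul_smul, inv_mul_cancel₀ hq0, one_smul, ← mul_smul, ← T_add,
      show (-1 + 1 : ℤ) = 0 by ring, T_zero, one_smul]
  induction n using Int.induction_on generalizing x with
  | zero => simp [T_zero]
  | succ k ih =>
    calc σ ((T ((k : ℤ) + 1) : LaurentPolynomial ℂ) • x)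
        = σ ((T (k : ℤ) : LaurentPolynomial ℂ) • ((T 1 : LaurentPolynomial ℂ) • x)) := by
          rw [T_add, mul_smul]
      _ = q ^ (k : ℤ) • (T (k : ℤ) : LaurentPolynomial ℂ) • σ ((T 1 : LaurentPolynomial ℂ) • x) :=
          ih _
      _ = q ^ (k : ℤ) • (T (k : ℤ) : LaurentPolynomial ℂ) •
            (q • (T 1 : LaurentPolynomial ℂ) • σ x) := by rw [hσ]
      _ = q ^ ((k : ℤ) + 1) • (T ((k : ℤ) + 1) : LaurentPolynomial ℂ) • σ x := by
          rw [aux_smul_comm, smul_smul, ← mul_smul (T (k : ℤ)) (T 1), ← T_add,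
            zpow_add_one₀ hq0]
  | pred k ih =>
    calc σ ((T (-(k : ℤ) - 1) : LaurentPolynomial ℂ) • x)
        = σ ((T (-(k : ℤ)) : LaurentPolynomial ℂ) • ((T (-1) : LaurentPolynomial ℂ) • x)) := by
          rw [show (-(k : ℤ) - 1) = (-(k : ℤ)) + (-1) by ring, T_add, mul_smul]
      _ = q ^ (-(k : ℤ)) • (T (-(k : ℤ)) : LaurentPolynomial ℂ) •
            σ ((T (-1) : LaurentPolynomial ℂ) • x) := ih _
      _ = q ^ (-(k : ℤ)) • (T (-(k : ℤ)) : LaurentPolynomial ℂ) •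
            (q⁻¹ • (T (-1) : LaurentPolynomial ℂ) • σ x) := by rw [hneg]
      _ = q ^ (-(k : ℤ) - 1) • (T (-(k : ℤ) - 1) : LaurentPolynomial ℂ) • σ x := by
          rw [aux_smul_comm, smul_smul, ← mul_smul (T (-(k : ℤ))) (T (-1)), ← T_add,
            show (-(k : ℤ) + -1) = -(k : ℤ) - 1 by ring, show q ^ (-(k : ℤ)) * q⁻¹
              = q ^ (-(k : ℤ) - 1) by rw [zpow_sub_one₀ hq0]]

include hσ in
lemma aux_iter (hq0 : q ≠ 0) (k : ℕ) (n : ℤ) (x : M) (hx : σ x = x) :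
    (σ.toLinearMap ^ k) ((T n : LaurentPolynomial ℂ) • x)
      = (q ^ n) ^ k • ((T n : LaurentPolynomial ℂ) • x) := by
  induction k with
  | zero => simp
  | succ k ih =>
    rw [pow_succ', Module.End.mul_apply, ih, map_smul, LinearEquiv.coe_coe,
      aux_T_smul q σ hσ hq0, hx, smul_smul, pow_succ', mul_comm ((q ^ n) ^ k) (q ^ n)]

include hσ in
theorem aux_indep (hq0 : q ≠ 0) (hq : ∀ n : ℤ, n ≠ 0 → q ^ n ≠ 1)
    {ι : Type*} (m : ι → M) (hfix : ∀ j, σ (m j) = m j)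
    (hli : LinearIndependent ℂ m) : LinearIndependent (LaurentPolynomial ℂ) m := by
  have hqinj : Function.Injective fun n : ℤ => q ^ n := by
    intro a b hab
    by_contra hne
    have h1 : q ^ (a - b) = 1 := by
      simp only at hab
      rw [zpow_sub₀ hq0, hab, div_self (zpow_ne_zero _ hq0)]
    exact hq (a - b) (sub_ne_zero.mpr hne) h1
  rw [linearIndependent_iff]
  intro l hl
  set U : Finset ℤ := l.support.biUnion (fun j => (coeffL (l j)).support) with hUdef
  set w : ℤ → M := fun n => ∑ j ∈ l.support, (coeffL (l j) n) • m j with hwdef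
  have hwfix : ∀ n, σ (w n) = w n := by
    intro n
    simp only [hwdef, map_sum, map_smul]
    exact Finset.sum_congr rfl fun j _ => by rw [hfix]
  have sumA : ∑ n ∈ U, (T n : LaurentPolynomial ℂ) • w n = 0 := by
    have : ∑ n ∈ U, (T n : LaurentPolynomial ℂ) • w n
        = ∑ j ∈ l.support, (l j) • m j := by
      simp only [hwdef, Finset.smul_sum]
      rw [Finset.sum_comm]
      refine Finset.sum_congr rfl fun j hj => ?_
      have hsub : (coeffL (l j)).support ⊆ U :=
        Finset.subset_biUnion_of_mem (fun j => (coeffL (l j)).support) hj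
      calc ∑ n ∈ U, (T n : LaurentPolynomial ℂ) • (coeffL (l j) n • m j)
          = ∑ n ∈ U, coeffL (l j) n • ((T n : LaurentPolynomial ℂ) • m j) :=
            Finset.sum_congr rfl fun n _ => aux_smul_comm _ _ _
        _ = ∑ n ∈ (coeffL (l j)).support,
              coeffL (l j) n • ((T n : LaurentPolynomial ℂ) • m j) :=
            (Finset.sum_subset hsub (fun n _ hn => by
              rw [Finsupp.notMem_support_iff.mp hn, zero_smul])).symm
        _ = (l j) • m j := (aux_smul_expand _ _).symm
    rw [this]
    rw [Finsupp.linearCombination_apply, Finsupp.sum] at hl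
    exact hl
  have sumB : ∀ k : ℕ, ∑ n ∈ U, ((q ^ n) ^ k) • ((T n : LaurentPolynomial ℂ) • w n) = 0 := by
    intro k
    have := congrArg (σ.toLinearMap ^ k) sumA
    rw [map_sum, map_zero] at this
    rw [← this]
    exact Finset.sum_congr rfl fun n _ =>
      (aux_iter q σ hσ hq0 k n (w n) (hwfix n)).symm
  have hvz : ∀ n ∈ U, (T n : LaurentPolynomial ℂ) • w n = 0 := by
    intro n hn
    rw [← Module.forall_dual_apply_eq_zero_iff ℂ]
    intro φ
    set N := U.card with hN
    set e : Fin N ≃ {x // x ∈ U} := U.equivFin.symm with he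
    have key : (fun i : Fin N => φ ((T ((e i : ℤ)) : LaurentPolynomial ℂ) • w (e i))) = 0 := by
      apply Matrix.eq_zero_of_forall_pow_sum_mul_pow_eq_zero
        (f := fun i : Fin N => q ^ ((e i : { x // x ∈ U }) : ℤ))
      · intro a b hab
        exact e.injective (Subtype.ext (hqinj hab))
      · intro k
        have hF : ∀ nn : ℤ, φ ((q ^ nn) ^ (k : ℕ) • ((T nn : LaurentPolynomial ℂ) • w nn))
            = φ ((T nn : LaurentPolynomial ℂ) • w nn) * (q ^ nn) ^ (k : ℕ) := by
          intro nn
          rw [map_smul, smul_eq_mul, mul_comm]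
        have hbij : ∑ i : Fin N,
              φ ((q ^ ((e i : ℤ))) ^ (k : ℕ) • ((T ((e i : ℤ)) : LaurentPolynomial ℂ) • w (e i)))
            = ∑ n ∈ U, φ ((q ^ n) ^ (k : ℕ) • ((T n : LaurentPolynomial ℂ) • w n)) := by
          refine Finset.sum_bij (fun (i : Fin N) (_ : i ∈ Finset.univ) => ((e i : ℤ))) ?_ ?_ ?_ ?_
          · intro i _
            exact (e i).2
          · intro a _ b _ h
            exact e.injective (Subtype.ext h)
          · intro b hb
            exact ⟨e.symm ⟨b, hb⟩, Finset.mem_univ _, by simp⟩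
          · intro i _
            rfl
        calc ∑ i : Fin N, φ ((T ((e i : ℤ)) : LaurentPolynomial ℂ) • w (e i))
              * (q ^ ((e i : { x // x ∈ U }) : ℤ)) ^ (k : ℕ)
            = ∑ i : Fin N, φ ((q ^ ((e i : ℤ))) ^ (k : ℕ)
                • ((T ((e i : ℤ)) : LaurentPolynomial ℂ) • w (e i))) :=
              Finset.sum_congr rfl fun i _ => (hF _).symm
          _ = ∑ n ∈ U, φ ((q ^ n) ^ (k : ℕ) • ((T n : LaurentPolynomial ℂ) • w n)) := hbij
          _ = 0 := by rw [← map_sum, sumB k, map_zero]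
    have := congrFun key (e.symm ⟨n, hn⟩)
    simpa using this
  have hwz : ∀ n ∈ U, w n = 0 := fun n hn => aux_T_inj n (w n) (hvz n hn)
  have hcz : ∀ j ∈ l.support, ∀ n : ℤ, coeffL (l j) n = 0 := by
    intro j hj n
    by_cases hn : n ∈ U
    · exact linearIndependent_iff'.mp hli l.support (fun j => coeffL (l j) n) (hwz n hn) j hj
    · by_contra hc
      exact hn (Finset.mem_biUnion.mpr ⟨j, hj, Finsupp.mem_support_iff.mpr hc⟩)
  refine Finsupp.ext fun j => ?_
  by_cases hj : j ∈ l.support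
  · show l j = 0
    exact LaurentPolynomial.ext fun a => (hcz j hj a).trans (by simp)
  · exact Finsupp.notMem_support_iff.mp hj

end Aux

/-- Let `q ∈ ℂ*` not be a root of unity and let `M` be an `A_q`-module
(encoded as an `A = ℂ[z,z⁻¹]`-module with a `ℂ`-linear automorphism `σ` satisfying
`σ(z·m) = q·z·σ(m)`) finitely generated over `A`.  If `m₁,…,m_r ∈ M` all satisfy
`σ(m_j) = m_j` and are linearly independent over `ℂ`, then they are linearly independent over
`A`.  Consequently `dim_ℂ ker(σ−1 : M → M) ≤ rk_A(M)`. -/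
theorem stmt_10 (q : ℂ) (hq : ∀ n : ℤ, n ≠ 0 → q ^ n ≠ 1)
    (M : Type*) [AddCommGroup M] [Module ℂ M] [Module (LaurentPolynomial ℂ) M]
    [IsScalarTower ℂ (LaurentPolynomial ℂ) M] [Module.Finite (LaurentPolynomial ℂ) M]
    (σ : M ≃ₗ[ℂ] M)
    (hσ : ∀ m : M, σ ((T 1 : LaurentPolynomial ℂ) • m) = q • ((T 1 : LaurentPolynomial ℂ) • σ m))
    (r : ℕ) (m : Fin r → M) (hfix : ∀ j, σ (m j) = m j) :
    (LinearIndependent ℂ m → LinearIndependent (LaurentPolynomial ℂ) m) ∧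
      Module.rank ℂ (LinearMap.ker (σ.toLinearMap - (LinearMap.id : M →ₗ[ℂ] M))) ≤
        Module.rank (LaurentPolynomial ℂ) M := by
  by_cases hq0 : q = 0
  · -- degenerate case: `M` is trivial.
    have hM : ∀ x : M, x = 0 := by
      intro x
      have h1 : σ ((T 1 : LaurentPolynomial ℂ) • x) = 0 := by
        rw [hσ, hq0, zero_smul]
      have h2 : (T 1 : LaurentPolynomial ℂ) • x = 0 := by
        have := σ.injective (by rw [h1, map_zero] : σ ((T 1 : LaurentPolynomial ℂ) • x) = σ 0)
        exact this
      exact aux_T_inj 1 x h2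
    haveI : Subsingleton M := subsingleton_of_forall_eq 0 fun x => hM x
    constructor
    · intro hli
      rcases isEmpty_or_nonempty (Fin r) with h | h
      · exact linearIndependent_empty_type
      · exact absurd (Subsingleton.elim (m h.some) 0) (hli.ne_zero h.some)
    · haveI : Subsingleton (LinearMap.ker (σ.toLinearMap - (LinearMap.id : M →ₗ[ℂ] M))) :=
        ⟨fun a b => Subtype.ext (Subsingleton.elim _ _)⟩
      rw [rank_subsingleton']
      exact zero_le
  · constructor
    · exact fun hli => aux_indep q σ hσ hq0 hq m hfix hli
    · rw [Module.rank_def ℂ]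
      refine ciSup_le' fun p => ?_
      obtain ⟨s, hs⟩ := p
      have hs' := hs.map'
        (LinearMap.ker (σ.toLinearMap - (LinearMap.id : M →ₗ[ℂ] M))).subtype
        (LinearMap.ker_eq_bot.mpr Subtype.coe_injective)
      have hfix' : ∀ x : s,
          σ ((⇑(LinearMap.ker (σ.toLinearMap - (LinearMap.id : M →ₗ[ℂ] M))).subtype
              ∘ Subtype.val) x)
          = (⇑(LinearMap.ker (σ.toLinearMap - (LinearMap.id : M →ₗ[ℂ] M))).subtype
              ∘ Subtype.val) x := by
        intro x
        have hx := (x : LinearMap.ker (σ.toLinearMap - (LinearMap.id : M →ₗ[ℂ] M))).2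
        rw [LinearMap.mem_ker, LinearMap.sub_apply, LinearMap.id_apply, sub_eq_zero] at hx
        exact hx
      have hA := aux_indep q σ hσ hq0 hq _ hfix' hs'
      exact hA.cardinal_le_rank
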